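/- arXiv:1904.08802 — 3 statements merged into one kernel-verified Lean document; each statement's English description precedes it below -/
import Mathlib

section
/- Let Σ be a varietor on a cocomplete, cowellpowered category C with an (E,M)-factorisation system in which E consists of epimorphisms. Then Σ admits minimisation of reachable automata (i.e., every reachable Σ-tree automaton has a minimisation) if and only if for every language L : Σ◇I → O there exists a minimal Σ-tree automaton accepting L. Moreover, in that case, if A is a reachable Σ-tree automaton, then the minimisation of A is a minimal automaton. -/
open CategoryTheory CategoryTheory.Limits

universe v u

namespace TreeAutPaper

variable {C : Type u} [Category.{v} C]

/-- A representative of a quotient of `X` lying in the class `E`: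
an epimorphism out of `X` belonging to `E`. -/
structure EQuot (E : MorphismProperty C) (X : C) where
  obj : C
  hom : X ⟶ obj
  epi : Epi hom
  mem : E hom

/-- The order on quotients: `q ≤ r` iff `r = h ∘ q` for some `h`. -/
def EQuot.le {E : MorphismProperty C} {X : C} (q r : EQuot E X) : Prop :=
  ∃ h : q.obj ⟶ r.obj, q.hom ≫ h = r.hom

/-- Two quotient representatives are equivalent when each is below the other. -/
def EQuot.equiv {E : MorphismProperty C} {X : C} (q r : EQuot E X) : Prop :=
  q.le r ∧ r.le q

/-- `C` is cowellpowered: quotients (epimorphisms out of an object, up to equivalence)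
of every object form a set (an essentially `v`-small collection). -/
def Cowellpowered (C : Type u) [Category.{v} C] : Prop :=
  ∀ X : C, Small.{v} (Quot (fun q r : EQuot (⊤ : MorphismProperty C) X => EQuot.equiv q r))

/-- An `(E,M)`-factorisation system: both classes are closed under composition with
isomorphisms, every morphism factors as an `E`-morphism followed by an `M`-morphism, and
we have a unique diagonal fill-in property. -/
structure IsFactorizationSystem (E M : MorphismProperty C) : Prop where
  respectsIso_E : E.RespectsIso
  respectsIso_M : M.RespectsIso
  factor : ∀ {X Y : C} (f : X ⟶ Y), ∃ (Z : C) (e : X ⟶ Z) (m : Z ⟶ Y), E e ∧ M m ∧ e ≫ m = f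
  diag : ∀ {A B X Y : C} (e : A ⟶ B) (m : X ⟶ Y) (f : A ⟶ X) (g : B ⟶ Y),
    E e → M m → f ≫ m = e ≫ g → ∃! d : B ⟶ X, e ≫ d = f ∧ d ≫ m = g

/-- `S` preserves `E`-cointersections, i.e. wide pushouts of families of epimorphisms
lying in `E`. -/
def PreservesECointersections (E : MorphismProperty C) (S : C ⥤ C) : Prop :=
  ∀ (J : Type (max u v)) (X : C) (objs : J → C) (arrows : ∀ j : J, X ⟶ objs j),
    (∀ j, E (arrows j)) → (∀ j, Epi (arrows j)) →
    ∀ c : Cocone (WidePushoutShape.wideSpan X objs arrows),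
      Nonempty (IsColimit c) → Nonempty (IsColimit (S.mapCocone c))

/-- `f : ΣX ⟶ Y` factors through (the image under `Σ` of) the quotient `q`. -/
def FactorsThru {E : MorphismProperty C} (S : C ⥤ C) {X Y : C} (f : S.obj X ⟶ Y)
    (q : EQuot E X) : Prop :=
  ∃ g : S.obj q.obj ⟶ Y, S.map q.hom ≫ g = f

/-- `q` is the `E`-cobase of `f : ΣX ⟶ Y`: the greatest quotient of `X` in `E`
through whose `Σ`-image `f` factors. -/
def IsCobase (E : MorphismProperty C) (S : C ⥤ C) {X Y : C} (f : S.obj X ⟶ Y)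
    (q : EQuot E X) : Prop :=
  FactorsThru S f q ∧ ∀ r : EQuot E X, FactorsThru S f r → r.le q

variable (Sg : C ⥤ C)

/-- A `Σ`-tree automaton over input object `I` and output object `O`. -/
structure TreeAut (I O : C) where
  Q : Endofunctor.Algebra Sg
  i : I ⟶ Q.a
  o : Q.a ⟶ O

variable {Sg} {I O : C}

/-- `h` is a homomorphism of automata from `A` to `B`. -/
structure IsAutHom (A B : TreeAut Sg I O) (h : A.Q.a ⟶ B.Q.a) : Prop where
  alg : Sg.map h ≫ B.Q.str = A.Q.str ≫ h
  hi : A.i ≫ h = B.i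
  ho : h ≫ B.o = A.o

/-- `(B, q)` is a quotient automaton of `A`: `q` is an epimorphism lying in `E`
which is a homomorphism of automata. -/
structure IsQuotAut (E : MorphismProperty C) (A B : TreeAut Sg I O)
    (q : A.Q.a ⟶ B.Q.a) : Prop where
  isHom : IsAutHom A B q
  epi : Epi q
  mem : E q

/-- `(M, qm)` is the minimisation of `A`: a quotient automaton through which every
quotient automaton of `A` factors by a (necessarily unique) automaton homomorphism. -/
def IsMinimisation (E : MorphismProperty C) (A M : TreeAut Sg I O)
    (qm : A.Q.a ⟶ M.Q.a) : Prop :=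
  IsQuotAut E A M qm ∧
    ∀ (B : TreeAut Sg I O) (q' : A.Q.a ⟶ B.Q.a), IsQuotAut E A B q' →
      ∃! h : B.Q.a ⟶ M.Q.a, IsAutHom B M h ∧ q' ≫ h = qm

/-- `A` is simple: every quotient automaton of `A` has its quotient map an isomorphism. -/
def IsSimple (E : MorphismProperty C) (A : TreeAut Sg I O) : Prop :=
  ∀ (B : TreeAut Sg I O) (q : A.Q.a ⟶ B.Q.a), IsQuotAut E A B q → IsIso q

section Varietor

variable (Fr : C ⥤ Endofunctor.Algebra Sg) (adj : Fr ⊣ Endofunctor.Algebra.forget Sg)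

/-- The reachability map of an automaton: the underlying morphism of the adjoint
transpose of the initial-state assignment. -/
def rch (A : TreeAut Sg I O) : (Fr.obj I).a ⟶ A.Q.a :=
  ((adj.homEquiv I A.Q).symm A.i).f

/-- The language of an automaton. -/
def lang (A : TreeAut Sg I O) : (Fr.obj I).a ⟶ O :=
  rch Fr adj A ≫ A.o

/-- The automaton `(Σ◇I, α_I, η_I, L)` on the free `Σ`-algebra over `I`. -/
def freeAut (L : (Fr.obj I).a ⟶ O) : TreeAut Sg I O :=
  { Q := Fr.obj I
    i := adj.unit.app I
    o := L }

/-- `A` is reachable: its reachability map lies in `E`. -/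
def Reachable (E : MorphismProperty C) (A : TreeAut Sg I O) : Prop :=
  E (rch Fr adj A)

/-- `A` is minimal: reachable, and every reachable automaton with the same language
admits a (necessarily unique) automaton homomorphism into `A`. -/
def Minimal (E : MorphismProperty C) (A : TreeAut Sg I O) : Prop :=
  Reachable Fr adj E A ∧
    ∀ B : TreeAut Sg I O, Reachable Fr adj E B → lang Fr adj B = lang Fr adj A →
      ∃! h : B.Q.a ⟶ A.Q.a, IsAutHom B A h

end Varietor


section AuxE

variable {E M : MorphismProperty C} (hfs : IsFactorizationSystem E M)
  (hE : ∀ ⦃X Y : C⦄ (f : X ⟶ Y), E f → Epi f)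

include hfs hE

lemma E_comp' {X Y Z : C} {f : X ⟶ Y} {g : Y ⟶ Z} (hf : E f) (hg : E g) : E (f ≫ g) := by
  obtain ⟨W, e, m, he, hm, hem⟩ := hfs.factor (f ≫ g)
  obtain ⟨d1, ⟨hd11, hd12⟩, -⟩ := hfs.diag f m e g hf hm (by rw [hem])
  obtain ⟨d2, ⟨hd21, hd22⟩, -⟩ :=
    hfs.diag g m d1 (𝟙 _) hg hm (by rw [hd12, Category.comp_id])
  haveI : Epi e := hE e he
  have hmd : m ≫ d2 = 𝟙 _ := by
    apply (cancel_epi e).1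
    rw [← Category.assoc, hem, Category.assoc, hd21, hd11, Category.comp_id]
  haveI : IsIso m := ⟨d2, hmd, hd22⟩
  haveI := hfs.respectsIso_E
  rw [← hem]
  exact MorphismProperty.RespectsIso.postcomp E m e he

lemma E_cancel {X Y Z : C} {f : X ⟶ Y} {g : Y ⟶ Z} (hf : E f) (hfg : E (f ≫ g)) : E g := by
  obtain ⟨W, e, m, he, hm, hem⟩ := hfs.factor g
  obtain ⟨d, ⟨hd1, hd2⟩, -⟩ := hfs.diag (f ≫ g) m (f ≫ e) (𝟙 _) hfg hm
    (by rw [Category.assoc, hem, Category.comp_id])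
  haveI : Epi f := hE f hf
  haveI : Epi e := hE e he
  have hmd : m ≫ d = 𝟙 _ := by
    apply (cancel_epi e).1
    apply (cancel_epi f).1
    have h3 : (f ≫ e ≫ m) ≫ d = f ≫ e := by rw [hem]; exact hd1
    simpa using h3
  haveI : IsIso m := ⟨d, hmd, hd2⟩
  haveI := hfs.respectsIso_E
  rw [← hem]
  exact MorphismProperty.RespectsIso.postcomp E m e he

lemma E_id (X : C) : E (𝟙 X) := by
  obtain ⟨W, e, m, he, hm, hem⟩ := hfs.factor (𝟙 X)
  haveI : IsSplitMono e := IsSplitMono.mk' ⟨m, hem⟩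
  haveI : Epi e := hE e he
  haveI : IsIso e := isIso_of_epi_of_isSplitMono e
  haveI : IsIso m := by
    rw [IsIso.eq_inv_of_hom_inv_id hem]
    infer_instance
  haveI := hfs.respectsIso_E
  rw [← hem]
  exact MorphismProperty.RespectsIso.postcomp E m e he

end AuxE

lemma autHom_id (A : TreeAut Sg I O) : IsAutHom A A (𝟙 _) :=
  ⟨by simp, by simp, by simp⟩

lemma autHom_comp {A B D : TreeAut Sg I O} {h : A.Q.a ⟶ B.Q.a} {k : B.Q.a ⟶ D.Q.a}
    (hh : IsAutHom A B h) (hk : IsAutHom B D k) : IsAutHom A D (h ≫ k) := by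
  refine ⟨?_, ?_, ?_⟩
  · rw [Sg.map_comp, Category.assoc, hk.alg, ← Category.assoc, hh.alg, Category.assoc]
  · rw [← Category.assoc, hh.hi, hk.hi]
  · rw [Category.assoc, hk.ho, hh.ho]

section AuxVar

variable (Fr : C ⥤ Endofunctor.Algebra Sg) (adj : Fr ⊣ Endofunctor.Algebra.forget Sg)

lemma rch_alg (A : TreeAut Sg I O) :
    Sg.map (rch Fr adj A) ≫ A.Q.str = (Fr.obj I).str ≫ rch Fr adj A :=
  ((adj.homEquiv I A.Q).symm A.i).h

lemma unit_rch (A : TreeAut Sg I O) : adj.unit.app I ≫ rch Fr adj A = A.i := by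
  have h := (adj.homEquiv I A.Q).apply_symm_apply A.i
  rw [Adjunction.homEquiv_unit] at h
  exact h

lemma hom_eq_rch (A : TreeAut Sg I O) (h : (Fr.obj I).a ⟶ A.Q.a)
    (halg : Sg.map h ≫ A.Q.str = (Fr.obj I).str ≫ h)
    (hi : adj.unit.app I ≫ h = A.i) : h = rch Fr adj A := by
  have key : adj.homEquiv I A.Q (Endofunctor.Algebra.Hom.mk h halg) = A.i := by
    rw [Adjunction.homEquiv_unit]; exact hi
  have key2 : (Endofunctor.Algebra.Hom.mk h halg : Fr.obj I ⟶ A.Q)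
      = (adj.homEquiv I A.Q).symm A.i := by
    rw [← key, Equiv.symm_apply_apply]
  exact congrArg Endofunctor.Algebra.Hom.f key2

lemma rch_comp {A B : TreeAut Sg I O} {h : A.Q.a ⟶ B.Q.a} (hh : IsAutHom A B h) :
    rch Fr adj A ≫ h = rch Fr adj B := by
  apply hom_eq_rch
  · rw [Sg.map_comp, Category.assoc, hh.alg, ← Category.assoc, rch_alg, Category.assoc]
  · rw [← hh.hi, ← unit_rch Fr adj A]
    exact (Category.assoc _ _ _).symm

lemma rch_free (L : (Fr.obj I).a ⟶ O) :
    rch Fr adj (freeAut Fr adj L) = 𝟙 _ :=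
  (hom_eq_rch Fr adj (freeAut Fr adj L) (𝟙 _) (by simp [freeAut]) (by simp [freeAut]; exact Category.comp_id _)).symm

lemma lang_free (L : (Fr.obj I).a ⟶ O) : lang Fr adj (freeAut Fr adj L) = L := by
  unfold lang
  rw [rch_free]
  exact Category.id_comp _

lemma lang_hom {A B : TreeAut Sg I O} {h : A.Q.a ⟶ B.Q.a} (hh : IsAutHom A B h) :
    lang Fr adj B = lang Fr adj A := by
  unfold lang
  rw [← rch_comp Fr adj hh, Category.assoc, hh.ho]

lemma free_reachable {E M : MorphismProperty C} (hfs : IsFactorizationSystem E M)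
    (hE : ∀ ⦃X Y : C⦄ (f : X ⟶ Y), E f → Epi f) (L : (Fr.obj I).a ⟶ O) :
    Reachable Fr adj E (freeAut Fr adj L) := by
  unfold Reachable
  rw [rch_free]
  exact E_id hfs hE _

/-- The minimisation of the free automaton on a language `L` is a minimal automaton
accepting `L`. -/
lemma free_min_minimal {E M : MorphismProperty C} (hfs : IsFactorizationSystem E M)
    (hE : ∀ ⦃X Y : C⦄ (f : X ⟶ Y), E f → Epi f)
    (L : (Fr.obj I).a ⟶ O) {N : TreeAut Sg I O} {q : (freeAut Fr adj L).Q.a ⟶ N.Q.a}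
    (hmin : IsMinimisation E (freeAut Fr adj L) N q) :
    Minimal Fr adj E N ∧ lang Fr adj N = L := by
  have hq : q = rch Fr adj N :=
    hom_eq_rch Fr adj N q hmin.1.isHom.alg hmin.1.isHom.hi
  have hreachN : Reachable Fr adj E N := by
    unfold Reachable
    rw [← hq]
    exact hmin.1.mem
  have hlangN : lang Fr adj N = L := by
    unfold lang
    rw [← hq]
    exact hmin.1.isHom.ho
  refine ⟨⟨hreachN, ?_⟩, hlangN⟩
  intro B hB hlB'
  have hlB : lang Fr adj B = L := by rw [hlB', hlangN]
  have hquot : IsQuotAut E (freeAut Fr adj L) B (rch Fr adj B) :=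
    { isHom := { alg := rch_alg Fr adj B, hi := unit_rch Fr adj B, ho := hlB }
      epi := hE _ hB
      mem := hB }
  obtain ⟨h, ⟨hh, hqh⟩, huniq⟩ := hmin.2 B (rch Fr adj B) hquot
  refine ⟨h, hh, ?_⟩
  intro k hk
  refine huniq k ⟨hk, ?_⟩
  exact (rch_comp Fr adj hk).trans hq.symm

end AuxVar

/-- Σ admits minimisation of reachable automata iff every language
over Σ is accepted by some minimal automaton; and in that case the minimisation of a
reachable automaton is itself minimal. -/
theorem admitsMinimisation_iff_minimal_exists
    {C : Type u} [Category.{v} C] [HasColimits C] (hcwp : Cowellpowered C)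
    (E M : MorphismProperty C) (hfs : IsFactorizationSystem E M)
    (hE : ∀ ⦃X Y : C⦄ (f : X ⟶ Y), E f → Epi f)
    {Sg : C ⥤ C} (Fr : C ⥤ Endofunctor.Algebra Sg)
    (adj : Fr ⊣ Endofunctor.Algebra.forget Sg)
    (I O : C) :
    ((∀ A : TreeAut Sg I O, Reachable Fr adj E A →
        ∃ (Qm : TreeAut Sg I O) (qm : A.Q.a ⟶ Qm.Q.a), IsMinimisation E A Qm qm) ↔
      (∀ L : (Fr.obj I).a ⟶ O,
        ∃ A : TreeAut Sg I O, Minimal Fr adj E A ∧ lang Fr adj A = L)) ∧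
    ((∀ A : TreeAut Sg I O, Reachable Fr adj E A →
        ∃ (Qm : TreeAut Sg I O) (qm : A.Q.a ⟶ Qm.Q.a), IsMinimisation E A Qm qm) →
      ∀ (A : TreeAut Sg I O), Reachable Fr adj E A →
        ∀ (Qm : TreeAut Sg I O) (qm : A.Q.a ⟶ Qm.Q.a),
          IsMinimisation E A Qm qm → Minimal Fr adj E Qm) := by
  constructor
  · constructor
    · -- minimisation ⇒ minimal automata exist for each language
      intro Hmin L
      obtain ⟨N, qN, hN⟩ := Hmin _ (free_reachable Fr adj hfs hE L)
      obtain ⟨hNmin, hNlang⟩ := free_min_minimal Fr adj hfs hE L hN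
      exact ⟨N, hNmin, hNlang⟩
    · -- minimal automata exist ⇒ minimisation exists
      intro Hex A hA
      obtain ⟨Mi, hMi, hMiL⟩ := Hex (lang Fr adj A)
      obtain ⟨q, hq, hquniq⟩ := hMi.2 A hA hMiL.symm
      have hrq : rch Fr adj A ≫ q = rch Fr adj Mi := rch_comp Fr adj hq
      have hEq : E q := by
        refine E_cancel hfs hE hA ?_
        rw [hrq]
        exact hMi.1
      refine ⟨Mi, q, ⟨hq, hE q hEq, hEq⟩, ?_⟩
      intro B q' hq'
      have hreachB : Reachable Fr adj E B := by
        unfold Reachable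
        rw [← rch_comp Fr adj hq'.isHom]
        exact E_comp' hfs hE hA hq'.mem
      have hlB : lang Fr adj B = lang Fr adj Mi := by
        rw [lang_hom Fr adj hq'.isHom, hMiL]
      obtain ⟨hB, hhB, hBuniq⟩ := hMi.2 B hreachB hlB
      refine ⟨hB, ⟨hhB, ?_⟩, ?_⟩
      · exact hquniq (q' ≫ hB) (autHom_comp hq'.isHom hhB)
      · rintro k ⟨hk, -⟩
        exact hBuniq k hk
  · -- minimisation of a reachable automaton is minimal
    intro Hmin A hA Qm qm hQm
    have hlangQm : lang Fr adj Qm = lang Fr adj A := lang_hom Fr adj hQm.1.isHom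
    obtain ⟨N, qN, hN⟩ := Hmin _ (free_reachable Fr adj hfs hE (lang Fr adj A))
    obtain ⟨hNmin, hNlang⟩ := free_min_minimal Fr adj hfs hE (lang Fr adj A) hN
    have hreachQm : Reachable Fr adj E Qm := by
      unfold Reachable
      rw [← rch_comp Fr adj hQm.1.isHom]
      exact E_comp' hfs hE hA hQm.1.mem
    obtain ⟨hM, hhM, hMuniq⟩ := hNmin.2 Qm hreachQm (by rw [hlangQm, hNlang])
    have hrchM : rch Fr adj Qm ≫ hM = rch Fr adj N := rch_comp Fr adj hhM
    have hEhM : E hM := by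
      refine E_cancel hfs hE hreachQm ?_
      rw [hrchM]
      exact hNmin.1
    haveI : Epi hM := hE hM hEhM
    have hquotN : IsQuotAut E A N (qm ≫ hM) :=
      { isHom := autHom_comp hQm.1.isHom hhM
        epi := by haveI := hQm.1.epi; exact epi_comp _ _
        mem := E_comp' hfs hE hQm.1.mem hEhM }
    obtain ⟨h, ⟨hh, hcomp⟩, -⟩ := hQm.2 N (qm ≫ hM) hquotN
    obtain ⟨h0, hh0, huniq0⟩ := hQm.2 Qm qm hQm.1
    have h1 : hM ≫ h = 𝟙 _ := by
      have e1 := huniq0 (hM ≫ h)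
        ⟨autHom_comp hhM hh, by rw [← Category.assoc]; exact hcomp⟩
      have e2 := huniq0 (𝟙 _) ⟨autHom_id Qm, Category.comp_id _⟩
      rw [e1, e2]
    refine ⟨hreachQm, ?_⟩
    intro B hB hlB
    obtain ⟨g, hg, hguniq⟩ := hNmin.2 B hB (by rw [hlB, hlangQm, hNlang])
    refine ⟨g ≫ h, autHom_comp hg hh, ?_⟩
    intro k hk
    have hkg : k ≫ hM = g := hguniq _ (autHom_comp hk hhM)
    rw [← Category.comp_id k, ← h1, ← Category.assoc, hkg]

end TreeAutPaper
end

section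
/- Let (T,η,μ) be a monad on a category C that has coproducts and reflexive coequalisers, and suppose T preserves reflexive coequalisers. Then for every language L : TI → O that has a Nerode equivalence, there exists a minimal T-automaton accepting L. -/
open CategoryTheory CategoryTheory.Limits

universe v u

namespace TreeAutPaper

variable {C : Type u} [Category.{v} C]

/-- The adjoint transpose `f♯ : FX ⟶ Y` of `f : X ⟶ UY` for the free–forgetful
adjunction of the Eilenberg–Moore category of a monad. -/
def transpose (T : Monad C) {X : C} {Y : T.Algebra} (f : X ⟶ Y.A) : T.free.obj X ⟶ Y :=
  ((Monad.adj T).homEquiv X Y).symm f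

/-- `T` maps reflexive coequalisers to epimorphisms. -/
def MapsReflexiveCoequalizersToEpis (S : C ⥤ C) : Prop :=
  ∀ {A B X : C} (f g : A ⟶ B) (c : B ⟶ X) (w : f ≫ c = g ≫ c),
    IsReflexivePair f g → Nonempty (IsColimit (Cofork.ofπ c w)) → Epi (S.map c)

/-- `S` preserves reflexive coequalisers. -/
def PreservesReflexiveCoequalizersProp (S : C ⥤ C) : Prop :=
  ∀ {A B X : C} (f g : A ⟶ B) (c : B ⟶ X) (w : f ≫ c = g ≫ c),
    IsReflexivePair f g → Nonempty (IsColimit (Cofork.ofπ c w)) →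
      Nonempty (IsColimit (Cofork.ofπ (S.map c)
        (show S.map f ≫ S.map c = S.map g ≫ S.map c by
          rw [← S.map_comp, ← S.map_comp, w])))

/-- `(R, p₁, p₂)` is the Nerode equivalence of the language `L : TI ⟶ O`. -/
def IsNerode (T : Monad C) {I O : C} (L : (T : C ⥤ C).obj I ⟶ O)
    (R : C) (p₁ p₂ : R ⟶ (T : C ⥤ C).obj I) : Prop :=
  ((T : C ⥤ C).map p₁ ≫ T.μ.app I ≫ L = (T : C ⥤ C).map p₂ ≫ T.μ.app I ≫ L) ∧
    ∀ (S : C) (q₁ q₂ : S ⟶ (T : C ⥤ C).obj I), IsReflexivePair q₁ q₂ →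
      (T : C ⥤ C).map q₁ ≫ T.μ.app I ≫ L = (T : C ⥤ C).map q₂ ≫ T.μ.app I ≫ L →
      ∃! u : S ⟶ R, u ≫ p₁ = q₁ ∧ u ≫ p₂ = q₂

variable (T : Monad C)

/-- A `T`-automaton: an Eilenberg–Moore algebra together with initial and final
state morphisms. -/
structure TAut (I O : C) where
  Q : T.Algebra
  i : I ⟶ Q.A
  o : Q.A ⟶ O

variable {T} {I O : C}

/-- The reachability map of a `T`-automaton. -/
def TAut.rch (A : TAut T I O) : (T : C ⥤ C).obj I ⟶ A.Q.A :=
  (transpose T A.i).f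

/-- The language of a `T`-automaton. -/
def TAut.lang (A : TAut T I O) : (T : C ⥤ C).obj I ⟶ O :=
  A.rch ≫ A.o

/-- `h` is a homomorphism of `T`-automata from `A` to `B`. -/
structure IsTAutHom (A B : TAut T I O) (h : A.Q.A ⟶ B.Q.A) : Prop where
  alg : (T : C ⥤ C).map h ≫ B.Q.a = A.Q.a ≫ h
  hi : A.i ≫ h = B.i
  ho : h ≫ B.o = A.o

/-- A `T`-automaton is reachable if its reachability map is a reflexive
regular epimorphism, i.e. a coequaliser of a reflexive pair. -/
def TAut.Reachable (A : TAut T I O) : Prop :=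
  ∃ (S : C) (q₁ q₂ : S ⟶ (T : C ⥤ C).obj I),
    IsReflexivePair q₁ q₂ ∧
      ∃ w : q₁ ≫ A.rch = q₂ ≫ A.rch, Nonempty (IsColimit (Cofork.ofπ A.rch w))

/-- A `T`-automaton is minimal if it is reachable and every reachable `T`-automaton
with the same language admits a (necessarily unique) homomorphism into it. -/
def TAut.Minimal (A : TAut T I O) : Prop :=
  A.Reachable ∧ ∀ B : TAut T I O, B.Reachable → B.lang = A.lang →
    ∃! h : B.Q.A ⟶ A.Q.A, IsTAutHom B A h

/-- Computation of the transpose. -/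
lemma transpose_f (T : Monad C) {X : C} {Y : T.Algebra} (f : X ⟶ Y.A) :
    (transpose T f).f = (T : C ⥤ C).map f ≫ Y.a := by
  simp [transpose, Monad.adj, Adjunction.mk']
  rfl

/-- The reachability map, computed. -/
lemma rch_eq (A : TAut T I O) : A.rch = (T : C ⥤ C).map A.i ≫ A.Q.a :=
  transpose_f T A.i

/-- The reachability map is an algebra morphism out of the free algebra. -/
lemma rch_hom (A : TAut T I O) :
    (T : C ⥤ C).map A.rch ≫ A.Q.a = T.μ.app I ≫ A.rch :=
  (transpose T A.i).h

lemma rch_eta (A : TAut T I O) : T.η.app I ≫ A.rch = A.i := by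
  have h3 : T.η.app I ≫ (T : C ⥤ C).map A.i = A.i ≫ T.η.app A.Q.A := by
    simpa using (T.η.naturality A.i).symm
  rw [rch_eq, ← Category.assoc, h3, Category.assoc, A.Q.unit, Category.comp_id]

/-- If `C` has coproducts and reflexive coequalisers and `T`
preserves reflexive coequalisers, then every language with a Nerode equivalence is
accepted by a minimal `T`-automaton. -/
theorem minimal_exists_of_nerode
    {C : Type u} [Category.{v} C] [HasCoproducts.{v} C] [HasReflexiveCoequalizers C]
    (T : Monad C) (hT : PreservesReflexiveCoequalizersProp (T : C ⥤ C))
    {I O : C} (L : (T : C ⥤ C).obj I ⟶ O)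
    (R : C) (p₁ p₂ : R ⟶ (T : C ⥤ C).obj I) (hN : IsNerode T L R p₁ p₂) :
    ∃ A : TAut T I O, A.Minimal ∧ A.lang = L := by
  obtain ⟨hL, hU⟩ := hN
  -- common section of (p₁, p₂)
  obtain ⟨u, ⟨hu1, hu2⟩, -⟩ := hU _ (𝟙 _) (𝟙 _)
    (IsReflexivePair.mk' (𝟙 _) (by simp) (by simp)) rfl
  -- the reflexive pair q₁, q₂ : TR ⟶ TI
  have hsec : ∀ (p : R ⟶ (T : C ⥤ C).obj I), u ≫ p = 𝟙 _ →
      (u ≫ T.η.app R) ≫ ((T : C ⥤ C).map p ≫ T.μ.app I) = 𝟙 _ := by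
    intro p hp
    have h1 : T.η.app R ≫ (T : C ⥤ C).map p = p ≫ T.η.app ((T : C ⥤ C).obj I) := by
      simpa using (T.η.naturality p).symm
    rw [Category.assoc, ← Category.assoc (T.η.app R), h1]
    simp [reassoc_of% hp, hp]
  have hrefl : IsReflexivePair ((T : C ⥤ C).map p₁ ≫ T.μ.app I)
      ((T : C ⥤ C).map p₂ ≫ T.μ.app I) :=
    IsReflexivePair.mk' (u ≫ T.η.app R) (hsec p₁ hu1) (hsec p₂ hu2)
  haveI := hrefl
  haveI : HasCoequalizer ((T : C ⥤ C).map p₁ ≫ T.μ.app I)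
      ((T : C ⥤ C).map p₂ ≫ T.μ.app I) := HasReflexiveCoequalizers.has_coeq _ _
  let Q0 : C := coequalizer ((T : C ⥤ C).map p₁ ≫ T.μ.app I) ((T : C ⥤ C).map p₂ ≫ T.μ.app I)
  let c : (T : C ⥤ C).obj I ⟶ Q0 :=
    coequalizer.π ((T : C ⥤ C).map p₁ ≫ T.μ.app I) ((T : C ⥤ C).map p₂ ≫ T.μ.app I)
  have wc : ((T : C ⥤ C).map p₁ ≫ T.μ.app I) ≫ c = ((T : C ⥤ C).map p₂ ≫ T.μ.app I) ≫ c :=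
    coequalizer.condition _ _
  have wc' : (T : C ⥤ C).map p₁ ≫ T.μ.app I ≫ c = (T : C ⥤ C).map p₂ ≫ T.μ.app I ≫ c := by
    simpa only [Category.assoc] using wc
  have hcolim : IsColimit (Cofork.ofπ c wc) := coequalizerIsCoequalizer _ _
  have epic : Epi c := ⟨fun f g h => Cofork.IsColimit.hom_ext hcolim (by simpa using h)⟩
  -- T preserves this coequaliser
  obtain ⟨hTc⟩ := hT _ _ c wc hrefl ⟨hcolim⟩
  have epiTc : Epi ((T : C ⥤ C).map c) :=
    ⟨fun f g h => Cofork.IsColimit.hom_ext hTc (by simpa using h)⟩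
  have hreflT : IsReflexivePair ((T : C ⥤ C).map ((T : C ⥤ C).map p₁ ≫ T.μ.app I))
      ((T : C ⥤ C).map ((T : C ⥤ C).map p₂ ≫ T.μ.app I)) := by
    obtain ⟨s, hs1, hs2⟩ := IsReflexivePair.common_section
      ((T : C ⥤ C).map p₁ ≫ T.μ.app I) ((T : C ⥤ C).map p₂ ≫ T.μ.app I)
    exact IsReflexivePair.mk' ((T : C ⥤ C).map s)
      (by rw [← Functor.map_comp, hs1, CategoryTheory.Functor.map_id])
      (by rw [← Functor.map_comp, hs2, CategoryTheory.Functor.map_id])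
  obtain ⟨hTTc⟩ := hT _ _ ((T : C ⥤ C).map c) _ hreflT ⟨hTc⟩
  have epiTTc : Epi ((T : C ⥤ C).map ((T : C ⥤ C).map c)) :=
    ⟨fun f g h => Cofork.IsColimit.hom_ext hTTc (by simpa using h)⟩
  -- the algebra structure on Q0
  have key : ∀ p : R ⟶ (T : C ⥤ C).obj I,
      (T : C ⥤ C).map ((T : C ⥤ C).map p ≫ T.μ.app I) ≫ T.μ.app I =
        T.μ.app R ≫ (T : C ⥤ C).map p ≫ T.μ.app I := by
    intro p
    rw [Functor.map_comp, Category.assoc, T.assoc I, ← Category.assoc, ← Category.assoc]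
    congr 1
    exact T.μ.naturality p
  have wa : (T : C ⥤ C).map ((T : C ⥤ C).map p₁ ≫ T.μ.app I) ≫ T.μ.app I ≫ c =
      (T : C ⥤ C).map ((T : C ⥤ C).map p₂ ≫ T.μ.app I) ≫ T.μ.app I ≫ c := by
    rw [← Category.assoc, key p₁, ← Category.assoc ((T : C ⥤ C).map _), key p₂]
    simp only [Category.assoc]
    rw [wc']
  let a : (T : C ⥤ C).obj Q0 ⟶ Q0 := Cofork.IsColimit.desc hTc (T.μ.app I ≫ c) wa
  have hca : (T : C ⥤ C).map c ≫ a = T.μ.app I ≫ c := by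
    simpa using Cofork.IsColimit.π_desc' hTc (T.μ.app I ≫ c) wa
  have hnatc : c ≫ T.η.app Q0 = T.η.app ((T : C ⥤ C).obj I) ≫ (T : C ⥤ C).map c := by
    simpa using T.η.naturality c
  have hmnatc : (T : C ⥤ C).map ((T : C ⥤ C).map c) ≫ T.μ.app Q0 =
      T.μ.app ((T : C ⥤ C).obj I) ≫ (T : C ⥤ C).map c := by
    simpa using T.μ.naturality c
  let Q : T.Algebra :=
    { A := Q0
      a := a
      unit := by
        rw [← cancel_epi c, ← Category.assoc, hnatc, Category.assoc, hca,
          ← Category.assoc]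
        simp
      assoc := by
        rw [← cancel_epi ((T : C ⥤ C).map ((T : C ⥤ C).map c))]
        calc (T : C ⥤ C).map ((T : C ⥤ C).map c) ≫ T.μ.app Q0 ≫ a
            = (T.μ.app ((T : C ⥤ C).obj I) ≫ (T : C ⥤ C).map c) ≫ a := by
              rw [← Category.assoc, hmnatc]
          _ = T.μ.app ((T : C ⥤ C).obj I) ≫ T.μ.app I ≫ c := by
              rw [Category.assoc, hca]
          _ = ((T : C ⥤ C).map (T.μ.app I) ≫ T.μ.app I) ≫ c := by
              rw [← Category.assoc, ← T.assoc I]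
          _ = (T : C ⥤ C).map (T.μ.app I) ≫ (T : C ⥤ C).map c ≫ a := by
              rw [Category.assoc, hca]
          _ = (T : C ⥤ C).map (T.μ.app I ≫ c) ≫ a := by
              rw [Functor.map_comp, Category.assoc]
          _ = (T : C ⥤ C).map ((T : C ⥤ C).map c ≫ a) ≫ a := by rw [hca]
          _ = (T : C ⥤ C).map ((T : C ⥤ C).map c) ≫ (T : C ⥤ C).map a ≫ a := by
              rw [Functor.map_comp, Category.assoc] }
  have wo : ((T : C ⥤ C).map p₁ ≫ T.μ.app I) ≫ L = ((T : C ⥤ C).map p₂ ≫ T.μ.app I) ≫ L := by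
    rw [Category.assoc, Category.assoc, hL]
  let o : Q0 ⟶ O := Cofork.IsColimit.desc hcolim L wo
  have hco : c ≫ o = L := by simpa using Cofork.IsColimit.π_desc' hcolim L wo
  let A : TAut T I O := ⟨Q, T.η.app I ≫ c, o⟩
  have haA : A.Q.a = a := rfl
  have hiA : A.i = T.η.app I ≫ c := rfl
  have hoA : A.o = o := rfl
  have freeDesc : (T : C ⥤ C).map (T.η.app I ≫ c) ≫ a = c := by
    rw [Functor.map_comp, Category.assoc, hca, ← Category.assoc, T.right_unit,
      Category.id_comp]
  have hrch : A.rch = c := by rw [rch_eq, hiA, haA, freeDesc]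
  have hlang : A.lang = L := by
    show A.rch ≫ A.o = L
    rw [hrch, hoA, hco]
  refine ⟨A, ⟨⟨_, (T : C ⥤ C).map p₁ ≫ T.μ.app I, (T : C ⥤ C).map p₂ ≫ T.μ.app I,
    hrefl, ?_⟩, ?_⟩, hlang⟩
  · rw [hrch]
    exact ⟨wc, ⟨hcolim⟩⟩
  · intro B hB hBl
    obtain ⟨S, r₁, r₂, hr, wB, ⟨hcB⟩⟩ := hB
    have epiB : Epi B.rch := ⟨fun f g h => Cofork.IsColimit.hom_ext hcB (by simpa using h)⟩
    obtain ⟨hTB⟩ := hT r₁ r₂ B.rch wB hr ⟨hcB⟩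
    have epiTB : Epi ((T : C ⥤ C).map B.rch) :=
      ⟨fun f g h => Cofork.IsColimit.hom_ext hTB (by simpa using h)⟩
    have hBL : B.rch ≫ B.o = L := by rw [← hlang, ← hBl]; rfl
    -- the pair (r₁, r₂) is L-equivalent
    have h4 : ∀ r : S ⟶ (T : C ⥤ C).obj I,
        (T : C ⥤ C).map r ≫ T.μ.app I ≫ B.rch ≫ B.o =
          (T : C ⥤ C).map (r ≫ B.rch) ≫ B.Q.a ≫ B.o := by
      intro r
      rw [← Category.assoc (T.μ.app I), ← rch_hom B, Functor.map_comp]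
      simp only [Category.assoc]
    have hrL : (T : C ⥤ C).map r₁ ≫ T.μ.app I ≫ L =
        (T : C ⥤ C).map r₂ ≫ T.μ.app I ≫ L := by
      rw [← hBL, h4 r₁, h4 r₂, wB]
    obtain ⟨v, ⟨hv1, hv2⟩, -⟩ := hU S r₁ r₂ hr hrL
    have hpc : p₁ ≫ c = p₂ ≫ c := by
      have e : ∀ p : R ⟶ (T : C ⥤ C).obj I,
          p ≫ c = T.η.app R ≫ (T : C ⥤ C).map p ≫ T.μ.app I ≫ c := by
        intro p
        have h5 : T.η.app R ≫ (T : C ⥤ C).map p = p ≫ T.η.app ((T : C ⥤ C).obj I) := by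
          simpa using (T.η.naturality p).symm
        rw [← Category.assoc, h5]
        simp
      rw [e p₁, e p₂, wc']
    have hrc : r₁ ≫ c = r₂ ≫ c := by
      rw [← hv1, ← hv2, Category.assoc, Category.assoc, hpc]
    let h : B.Q.A ⟶ Q0 := Cofork.IsColimit.desc hcB c hrc
    have hBh : B.rch ≫ h = c := by simpa using Cofork.IsColimit.π_desc' hcB c hrc
    have huniq : ∀ h' : B.Q.A ⟶ A.Q.A, IsTAutHom B A h' → B.rch ≫ h' = c := by
      intro h' hh'
      have halg' : (T : C ⥤ C).map h' ≫ a = B.Q.a ≫ h' := hh'.alg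
      have step : B.rch ≫ h' = (T : C ⥤ C).map (B.i ≫ h') ≫ a := by
        rw [Functor.map_comp, Category.assoc, halg', ← Category.assoc, ← rch_eq B]
      rw [step, hh'.hi, hiA, freeDesc]
    refine ⟨h, ⟨?_, ?_, ?_⟩, fun h' hh' => ?_⟩
    · -- algebra hom
      rw [haA, ← cancel_epi ((T : C ⥤ C).map B.rch), ← Category.assoc, ← Functor.map_comp,
        hBh, hca, ← Category.assoc, rch_hom B, Category.assoc, hBh]
    · -- initial states
      rw [hiA, ← rch_eta B, Category.assoc, hBh]
    · -- outputs
      rw [hoA, ← cancel_epi B.rch, ← Category.assoc, hBh, hco, hBL]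
    · -- uniqueness
      rw [← cancel_epi B.rch, hBh]
      exact huniq h' hh'

end TreeAutPaper
end

section
/- Let C be cocomplete and cowellpowered with an (E,M)-factorisation system in which E consists of epimorphisms, and suppose Σ : C → C preserves E-cointersections. For every Σ-algebra (Q,δ), the assignment sending q ∈ Quot_E(Q) to Θ_δ(q), the E-cobase of q∘δ, is a well-defined monotone operator Θ_δ : Quot_E(Q) → Quot_E(Q) on the complete lattice Quot_E(Q). -/
open CategoryTheory CategoryTheory.Limits

universe v u

namespace TreeAutPaper

variable {C : Type u} [Category.{v} C]

variable (Sg : C ⥤ C)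

variable {Sg} {I O : C}

section Aux

/-- The relation `EQuot.equiv` is an equivalence relation. -/
lemma EQuot.equiv_equivalence {E : MorphismProperty C} {X : C} :
    Equivalence (fun q r : EQuot E X => EQuot.equiv q r) := by
  constructor
  · intro q; exact ⟨⟨𝟙 _, Category.comp_id _⟩, ⟨𝟙 _, Category.comp_id _⟩⟩
  · intro q r h; exact ⟨h.2, h.1⟩
  · rintro q r s ⟨⟨h1, e1⟩, ⟨h1', e1'⟩⟩ ⟨⟨h2, e2⟩, ⟨h2', e2'⟩⟩
    exact ⟨⟨h1 ≫ h2, by rw [← Category.assoc, e1, e2]⟩,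
           ⟨h2' ≫ h1', by rw [← Category.assoc, e2', e1']⟩⟩

/-- Existence of the `E`-cobase of any morphism `f : Σ X ⟶ Y`. -/
lemma cobase_exists [HasColimits C] (hcwp : Cowellpowered C)
    (E M : MorphismProperty C) (hfs : IsFactorizationSystem E M)
    (hE : ∀ ⦃X Y : C⦄ (f : X ⟶ Y), E f → Epi f)
    (Sg : C ⥤ C) (hpres : PreservesECointersections E Sg)
    {X Y : C} (f : Sg.obj X ⟶ Y) : ∃ t : EQuot E X, IsCobase E Sg f t := by
  classical
  haveI := hcwp X
  -- the collection of quotients through which `f` factors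
  set S := {r : EQuot E X // FactorsThru Sg f r} with hS
  let toTop : EQuot E X → EQuot (⊤ : MorphismProperty C) X :=
    fun r => ⟨r.obj, r.hom, r.epi, trivial⟩
  let ψ : S → Shrink.{v} (Quot (fun q r : EQuot (⊤ : MorphismProperty C) X =>
      EQuot.equiv q r)) := fun s => equivShrink _ (Quot.mk _ (toTop s.1))
  -- a small set of representatives
  let J₀ : Type v := Set.range ψ
  let ρ : J₀ → S := fun k => k.2.choose
  have hρ : ∀ k : J₀, ψ (ρ k) = k.1 := fun k => k.2.choose_spec
  -- key: every element of `S` is below its representative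
  have hrep : ∀ s : S, ∃ k : J₀, ∃ h : s.1.obj ⟶ (ρ k).1.obj,
      s.1.hom ≫ h = (ρ k).1.hom := by
    intro s
    refine ⟨⟨ψ s, ⟨s, rfl⟩⟩, ?_⟩
    have h1 : ψ (ρ ⟨ψ s, ⟨s, rfl⟩⟩) = ψ s := hρ _
    have h2 : Quot.mk _ (toTop (ρ ⟨ψ s, ⟨s, rfl⟩⟩).1) = Quot.mk _ (toTop s.1) :=
      (equivShrink _).injective h1
    have h3 := (EQuot.equiv_equivalence).eqvGen_iff.mp (Quot.eqvGen_exact h2)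
    exact h3.2
  -- the wide pushout of the representative family
  let J : Type (max u v) := ULift.{u} J₀
  let objs : J → C := fun k => (ρ k.down).1.obj
  let arrows : ∀ k : J, X ⟶ objs k := fun k => (ρ k.down).1.hom
  haveI : HasColimitsOfShape (WidePushoutShape J) C :=
    hasColimitsOfShape_of_equivalence
      (WidePushoutShape.equivalenceOfEquiv _ (Equiv.ulift.{u, v}.symm : J₀ ≃ ULift.{u} J₀))
  let D := WidePushoutShape.wideSpan X objs arrows
  let c : Cocone D := colimit.cocone D
  have hc : IsColimit c := colimit.isColimit D
  let p : X ⟶ c.pt := c.ι.app none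
  have hleg : ∀ k : J, arrows k ≫ c.ι.app (some k) = p := by
    intro k
    have := c.w (WidePushoutShape.Hom.init k)
    exact this
  -- `p` lies in `E` (cointersections of `E`-morphisms are in `E`)
  obtain ⟨Z, e, m, hEe, hMm, hem⟩ := hfs.factor p
  have hd : ∀ k : J, ∃! d : objs k ⟶ Z,
      arrows k ≫ d = e ∧ d ≫ m = c.ι.app (some k) := by
    intro k
    exact hfs.diag (arrows k) m e (c.ι.app (some k)) ((ρ k.down).1.mem) hMm
      (by rw [hem, hleg])
  choose d hd1 hd2 using fun k => (hd k).exists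
  let c' : Cocone D := WidePushoutShape.mkCocone e d (fun k => by
    exact hd1 k)
  let u : c.pt ⟶ Z := hc.desc c'
  have hu0 : p ≫ u = e := hc.fac c' none
  have huk : ∀ k, c.ι.app (some k) ≫ u = d k := fun k => hc.fac c' (some k)
  have hum : u ≫ m = 𝟙 c.pt := by
    apply hc.hom_ext
    rintro (_ | k)
    · show p ≫ u ≫ m = p ≫ 𝟙 _
      rw [← Category.assoc, hu0, hem, Category.comp_id]
    · show c.ι.app (some k) ≫ u ≫ m = c.ι.app (some k) ≫ 𝟙 _
      rw [← Category.assoc, huk]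
      exact (hd2 k).trans (Category.comp_id _).symm
  have hmu : m ≫ u = 𝟙 Z := by
    haveI := hE e hEe
    have : e ≫ m ≫ u = e ≫ 𝟙 Z := by
      rw [← Category.assoc, hem, hu0, Category.comp_id]
    exact (cancel_epi e).mp this
  haveI hmiso : IsIso m := ⟨u, hmu, hum⟩
  haveI : E.RespectsIso := hfs.respectsIso_E
  have hEp : E p := by
    rw [← hem]
    exact MorphismProperty.RespectsIso.postcomp E m e hEe
  haveI hepie : Epi e := hE e hEe
  have hepip : Epi p := by rw [← hem]; exact epi_comp e m
  -- `f` factors through `Σ p` by preservation of cointersections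
  obtain ⟨hmc⟩ := hpres J X objs arrows (fun k => (ρ k.down).1.mem)
    (fun k => hE _ (ρ k.down).1.mem) c ⟨hc⟩
  choose g hg using fun k : J => (ρ k.down).2
  let c₂ : Cocone (D ⋙ Sg) := WidePushoutShape.mkCocone (F := D ⋙ Sg) f g (fun k => by
    have : Sg.map (arrows k) ≫ g k = f := hg k
    exact this)
  let v : Sg.obj c.pt ⟶ Y := hmc.desc c₂
  have hv : Sg.map p ≫ v = f := hmc.fac c₂ none
  refine ⟨⟨c.pt, p, hepip, hEp⟩, ⟨v, hv⟩, ?_⟩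
  -- maximality
  intro r hr
  obtain ⟨k, h, hh⟩ := hrep ⟨r, hr⟩
  exact ⟨h ≫ c.ι.app (some (ULift.up k)), by
    have hh' : r.hom ≫ h = (ρ k).1.hom := hh
    have h4 : (r.hom ≫ h) ≫ c.ι.app (some (ULift.up k)) = p := by
      rw [hh']
      exact hleg (ULift.up k)
    exact (Category.assoc _ _ _).symm.trans h4⟩

end Aux

/-- If `Σ` preserves `E`-cointersections then, for every `Σ`-algebra
`(Q,δ)`, the assignment `q ↦ Θ_δ(q)` (the `E`-cobase of `q ∘ δ`) is a well-defined
monotone operator on the complete lattice `Quot_E(Q)`: the cobase of `q ∘ δ` exists for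
every quotient `q`, it is unique up to the equivalence of quotients, and it is monotone
with respect to the quotient order. -/
theorem theta_well_defined_monotone
    {C : Type u} [Category.{v} C] [HasColimits C] (hcwp : Cowellpowered C)
    (E M : MorphismProperty C) (hfs : IsFactorizationSystem E M)
    (hE : ∀ ⦃X Y : C⦄ (f : X ⟶ Y), E f → Epi f)
    (Sg : C ⥤ C) (hpres : PreservesECointersections E Sg)
    {Q : C} (δ : Sg.obj Q ⟶ Q) :
    -- Θ_δ is well defined: the cobase exists …
    (∀ q : EQuot E Q, ∃ t : EQuot E Q, IsCobase E Sg (δ ≫ q.hom) t) ∧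
    -- … and is unique up to the equivalence of quotients, …
    (∀ (q t t' : EQuot E Q), IsCobase E Sg (δ ≫ q.hom) t →
      IsCobase E Sg (δ ≫ q.hom) t' → t.equiv t') ∧
    -- … and Θ_δ is monotone.
    (∀ (q q' t t' : EQuot E Q), IsCobase E Sg (δ ≫ q.hom) t →
      IsCobase E Sg (δ ≫ q'.hom) t' → q.le q' → t.le t') := by
  refine ⟨fun q => cobase_exists hcwp E M hfs hE Sg hpres (δ ≫ q.hom), ?_, ?_⟩
  · intro q t t' ht ht'
    exact ⟨ht'.2 t ht.1, ht.2 t' ht'.1⟩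
  · rintro q q' t t' ht ht' ⟨h, hh⟩
    apply ht'.2 t
    obtain ⟨g, hg⟩ := ht.1
    exact ⟨g ≫ h, by rw [← Category.assoc, hg, Category.assoc, hh]⟩


end TreeAutPaper
end
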